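/- (Continuity of the marginal flow) Let d ≥ 1 and let K be a finite index set. For each k ∈ K let w_k ≥ 0, let p_k : ℝ × ℝ^d → ℝ be continuously differentiable with p_k(t,x) > 0, and let u_k : ℝ × ℝ^d → ℝ^d be continuously differentiable, such that each pair satisfies the continuity equation ∂_t p_k(t,x) = −div_x(p_k(t,x) · u_k(t,x)). Define the marginal density p(t,x) = Σ_{k∈K} w_k p_k(t,x), assume p(t,x) > 0, and define the marginal velocity field u(t,x) = (Σ_{k∈K} w_k p_k(t,x) u_k(t,x)) / p(t,x). Then the pair (p, u) also satisfies the continuity equation: ∂_t p(t,x) = −div_x(p(t,x) · u(t,x)). -/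

import Mathlib

open Finset

/-- Divergence of a vector field `F : ℝ^d → ℝ^d` at `x`: `Σ_i ∂F_i/∂x_i (x)`. -/
noncomputable def divergence {d : ℕ} (F : (Fin d → ℝ) → (Fin d → ℝ)) (x : Fin d → ℝ) : ℝ :=
  ∑ i, fderiv ℝ (fun y => F y i) x (Pi.single i 1)

/-- **Continuity of the marginal flow.** If each conditional pair `(p_k, u_k)` satisfies
the continuity equation `∂_t p_k = −div(p_k u_k)`, then the mixture
`p = Σ_k w_k p_k` together with the posterior-weighted marginal velocity
`u = (Σ_k w_k p_k u_k)/p` also satisfies the continuity equation. -/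
theorem marginal_continuity_equation
    (d : ℕ) (hd : 1 ≤ d) (K : Type*) [Fintype K]
    (w : K → ℝ) (hw : ∀ k, 0 ≤ w k)
    (p : K → ℝ → (Fin d → ℝ) → ℝ)
    (u : K → ℝ → (Fin d → ℝ) → (Fin d → ℝ))
    (hp : ∀ k, ContDiff ℝ 1 (fun q : ℝ × (Fin d → ℝ) => p k q.1 q.2))
    (hppos : ∀ k t x, 0 < p k t x)
    (hu : ∀ k, ContDiff ℝ 1 (fun q : ℝ × (Fin d → ℝ) => u k q.1 q.2))
    (hcont : ∀ k t x,
      deriv (fun s => p k s x) t =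
        -divergence (fun y => fun i => p k t y * u k t y i) x)
    (P : ℝ → (Fin d → ℝ) → ℝ)
    (hP : ∀ t x, P t x = ∑ k, w k * p k t x)
    (hPpos : ∀ t x, 0 < P t x)
    (U : ℝ → (Fin d → ℝ) → (Fin d → ℝ))
    (hU : ∀ t x i, U t x i = (∑ k, w k * p k t x * u k t x i) / P t x) :
    ∀ t x,
      deriv (fun s => P s x) t =
        -divergence (fun y => fun i => P t y * U t y i) x := by
  intro t x
  have hdp : ∀ k, Differentiable ℝ (fun q : ℝ × (Fin d → ℝ) => p k q.1 q.2) :=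
    fun k => (hp k).differentiable one_ne_zero
  have hdu : ∀ k, Differentiable ℝ (fun q : ℝ × (Fin d → ℝ) => u k q.1 q.2) :=
    fun k => (hu k).differentiable one_ne_zero
  have hdt : ∀ k, DifferentiableAt ℝ (fun s => p k s x) t := fun k =>
    ((hdp k).comp (differentiable_id.prodMk (differentiable_const x))) t
  have hdyp : ∀ k, Differentiable ℝ (fun y : Fin d → ℝ => p k t y) := fun k =>
    (hdp k).comp ((differentiable_const t).prodMk differentiable_id)
  have hdyu : ∀ k i, Differentiable ℝ (fun y : Fin d → ℝ => u k t y i) := by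
    intro k i
    have h3 : Differentiable ℝ (fun y : Fin d → ℝ => u k t y) :=
      (hdu k).comp ((differentiable_const t).prodMk differentiable_id)
    exact differentiable_pi.mp h3 i
  have hkey : ∀ y i, P t y * U t y i = ∑ k, w k * p k t y * u k t y i := by
    intro y i
    rw [hU t y i, mul_div_cancel₀ _ (hPpos t y).ne']
  have hL : deriv (fun s => P s x) t = ∑ k, w k * deriv (fun s => p k s x) t := by
    have h1 : (fun s => P s x) = fun s => ∑ k, w k * p k s x := by
      funext s; exact hP s x
    rw [h1, deriv_fun_sum (fun k _ => ((hdt k).const_mul (w k)))]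
    exact Finset.sum_congr rfl fun k _ => deriv_const_mul _ (hdt k)
  have hR : divergence (fun y => fun i => P t y * U t y i) x =
      ∑ k, w k * divergence (fun y => fun i => p k t y * u k t y i) x := by
    unfold divergence
    have h2 : ∀ i, fderiv ℝ (fun y => P t y * U t y i) x (Pi.single i 1) =
        ∑ k, w k * fderiv ℝ (fun y => p k t y * u k t y i) x (Pi.single i 1) := by
      intro i
      have he : (fun y => P t y * U t y i) =
          fun y => ∑ k, w k * (p k t y * u k t y i) := by
        funext y; rw [hkey y i]; simp [mul_assoc]
      rw [he, fderiv_fun_sum (fun k _ => ((hdyp k x).fun_mul (hdyu k i x)).const_mul (w k))]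
      rw [ContinuousLinearMap.sum_apply]
      refine Finset.sum_congr rfl fun k _ => ?_
      rw [fderiv_const_mul ((hdyp k x).fun_mul (hdyu k i x)) (w k)]
      simp
    simp_rw [h2]
    rw [Finset.sum_comm]
    simp [Finset.mul_sum]
  rw [hL, hR]
  simp only [hcont, mul_neg]
  rw [Finset.sum_neg_distrib]
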